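/- Let n, k, α be positive integers with k ≥ 3 and 4α − 3n ≥ 1, set r = r₄(n,k,α) = 4^{k−1}·n − ((4^k − 1)/3)·α, and suppose 4r ≥ k. If there is no quaternary Hermitian LCD [4r, k, 3r] code C₀ whose Hermitian dual C₀^{⊥H} contains no vector of weight 1, then there is no quaternary Hermitian LCD [n, k, α] code C whose Hermitian dual C^{⊥H} contains no vector of weight 1. -/

import Mathlib

open scoped Classical

noncomputable section

/-- The finite field with four elements. -/
abbrev F4 := GaloisField 2 2

/-- The (Hamming) weight of a vector over `F4`: the number of nonzero coordinates. -/
def wt {n : ℕ} (x : Fin n → F4) : ℕ :=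
  (Finset.univ.filter (fun i => x i ≠ 0)).card

/-- Hermitian inner product on `F4^n`: `∑ i, x i * (conj (y i))` with `conj z = z^2`. -/
def hermInner {n : ℕ} (x y : Fin n → F4) : F4 :=
  ∑ i, x i * (y i) ^ 2

/-- Membership in the Hermitian dual `C^{⊥H}` of a code `C`. -/
def inHermDual {n : ℕ} (C : Submodule F4 (Fin n → F4)) (x : Fin n → F4) : Prop :=
  ∀ y ∈ C, hermInner x y = 0

/-- `C` is Hermitian LCD: `C ∩ C^{⊥H} = {0}`. -/
def IsHermLCD {n : ℕ} (C : Submodule F4 (Fin n → F4)) : Prop :=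
  ∀ x ∈ C, inHermDual C x → x = 0

/-- `C` has minimum weight (exactly) `d`. -/
def minWtIs {n : ℕ} (C : Submodule F4 (Fin n → F4)) (d : ℕ) : Prop :=
  (∃ x ∈ C, x ≠ 0 ∧ wt x = d) ∧ ∀ x ∈ C, x ≠ 0 → d ≤ wt x

/-- `C` is a quaternary Hermitian LCD `[n,k,d]` code. -/
def IsHermLCDCode (n k d : ℕ) (C : Submodule F4 (Fin n → F4)) : Prop :=
  Module.finrank F4 C = k ∧ IsHermLCD C ∧ minWtIs C d

/-- `d₄(n,k) = d`: the largest minimum weight among quaternary Hermitian LCD `[n,k]` codes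
is `d`. -/
def d4Is (n k d : ℕ) : Prop :=
  (∃ C : Submodule F4 (Fin n → F4), IsHermLCDCode n k d C) ∧
  (∀ C : Submodule F4 (Fin n → F4), Module.finrank F4 C = k → IsHermLCD C →
    ∃ x ∈ C, x ≠ 0 ∧ wt x ≤ d)

end

noncomputable instance : Fintype F4 := Fintype.ofFinite F4
open Finset
noncomputable instance : Fintype F4 := Fintype.ofFinite F4

lemma F4card : Fintype.card F4 = 4 := by
  have := GaloisField.card 2 2 (by norm_num)
  simpa using this
lemma F4two : (2 : F4) = 0 := by exact_mod_cast CharP.cast_eq_zero F4 2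
lemma F4cast4 : ((4:ℕ) : F4) = 0 := by
  push_cast
  rw [show (4:F4) = 2*2 by norm_num, F4two, zero_mul]
lemma F4addself (a : F4) : a + a = 0 := by
  have h : (2 : F4) * a = 0 := by rw [F4two, zero_mul]
  linear_combination h
lemma F4cube (a : F4) (h : a ≠ 0) : a ^ 3 = 1 := by
  have := FiniteField.pow_card_sub_one_eq_one a h
  rwa [F4card] at this
lemma cardFun (m : ℕ) : Fintype.card (Fin m → F4) = 4 ^ m := by
  rw [Fintype.card_fun, F4card, Fintype.card_fin]
lemma F4exists_unit : ∃ c : F4, c ≠ 0 ∧ c ≠ 1 := by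
  by_contra h
  push_neg at h
  have hsub : (Finset.univ : Finset F4) ⊆ {0, 1} := by
    intro a _
    by_cases h0 : a = 0
    · simp [h0]
    · simp [h a h0]
  have hle := Finset.card_le_card hsub
  have h2 : ({0, 1} : Finset F4).card ≤ 2 := Finset.card_insert_le _ _ |>.trans (by simp)
  rw [Finset.card_univ, F4card] at hle
  omega
lemma F4sum : ∑ a : F4, a = 0 := by
  obtain ⟨c, hc0, hc1⟩ := F4exists_unit
  have h : ∑ a : F4, a = ∑ a : F4, c * a := by
    rw [← Equiv.sum_comp (Equiv.mulLeft₀ c hc0) (fun a : F4 => a)]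
    simp [Equiv.mulLeft₀]
  have h2 : (c - 1) * (∑ a : F4, a) = 0 := by
    rw [sub_mul, one_mul, Finset.mul_sum, ← h, sub_self]
  rcases mul_eq_zero.mp h2 with h' | h'
  · exact absurd (sub_eq_zero.mp h') hc1
  · exact h'
lemma F4sumsq : ∑ a : F4, a ^ 2 = 0 := by
  have := map_sum (frobenius F4 2) (fun a : F4 => a) Finset.univ
  simp only [frobenius_def] at this
  rw [← this, F4sum]; norm_num
lemma F4sumcube : ∑ a : F4, a ^ 3 = 1 := by
  have h : ∑ a : F4, a ^ 3 = ∑ a : F4, (if a = 0 then (0:F4) else 1) := by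
    refine Finset.sum_congr rfl fun a _ => ?_
    by_cases h : a = 0 <;> simp [h, F4cube]
  rw [h, Finset.sum_ite, Finset.sum_const, Finset.sum_const, smul_zero, zero_add]
  have hcard : (Finset.univ.filter (fun a : F4 => ¬ a = 0)).card = 3 := by
    have h1 : (Finset.univ.filter (fun a : F4 => a = 0)).card = 1 := by
      have h0 : (Finset.univ.filter (fun a : F4 => a = 0)) = {0} := by
        ext a; simp
      rw [h0, Finset.card_singleton]
    have h2 := Finset.card_filter_add_card_filter_not
      (s := (Finset.univ : Finset F4)) (p := fun a : F4 => a = 0)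
    rw [Finset.card_univ, F4card] at h2
    omega
  rw [hcard]
  have h1 : ((3:ℕ) : F4) = 1 := by
    push_cast
    rw [show (3:F4) = 2 + 1 by norm_num, F4two, zero_add]
  rw [nsmul_eq_mul, h1, one_mul]

section Counting
variable {V W : Type} [AddCommGroup V] [Fintype V] [Module F4 V]
  [AddCommGroup W] [Fintype W] [Module F4 W] [DecidableEq W]

omit [Fintype W] in
lemma fiber_card_eq (f : V →ₗ[F4] W) {w w' : W} (hw : ∃ x, f x = w) (hw' : ∃ x, f x = w') :
    (Finset.univ.filter fun x => f x = w).card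
      = (Finset.univ.filter fun x => f x = w').card := by
  obtain ⟨x₀, hx₀⟩ := hw
  obtain ⟨x₁, hx₁⟩ := hw'
  apply Finset.card_nbij' (fun x => x + (x₁ - x₀)) (fun x => x - (x₁ - x₀))
  · intro x hx
    simp only [Finset.coe_filter, Set.mem_setOf_eq, Finset.mem_filter, Finset.mem_univ, true_and] at hx ⊢
    rw [map_add, hx, map_sub, hx₀, hx₁]; exact add_sub_cancel w w'
  · intro x hx
    simp only [Finset.coe_filter, Set.mem_setOf_eq, Finset.mem_filter, Finset.mem_univ, true_and] at hx ⊢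
    rw [map_sub, hx, map_sub, hx₀, hx₁]; exact sub_sub_cancel w' w
  · intro x _; exact add_sub_cancel_right x (x₁ - x₀)
  · intro x _; exact sub_add_cancel x (x₁ - x₀)

lemma fiber_count (f : V →ₗ[F4] W) (hf : Function.Surjective f) (w : W) :
    (Finset.univ.filter fun x => f x = w).card * Fintype.card W = Fintype.card V := by
  have h1 : Fintype.card V
      = ∑ w' : W, (Finset.univ.filter fun x => f x = w').card := by
    rw [← Finset.card_univ]
    exact Finset.card_eq_sum_card_fiberwise (fun x _ => Finset.mem_univ (f x))
  have h2 : ∀ w' : W, (Finset.univ.filter fun x => f x = w').card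
      = (Finset.univ.filter fun x => f x = w).card := fun w' =>
    fiber_card_eq f (hf w') (hf w)
  rw [h1, Finset.sum_congr rfl (fun w' _ => h2 w'), Finset.sum_const, Finset.card_univ,
    smul_eq_mul, mul_comm]
end Counting

section Functionals
variable {m : ℕ}

lemma funct_surj (f : (Fin m → F4) →ₗ[F4] F4) (hf : f ≠ 0) : Function.Surjective f := by
  obtain ⟨x₀, hx₀⟩ : ∃ x, f x ≠ 0 := by
    by_contra h
    push_neg at h
    exact hf (LinearMap.ext fun x => (h x).trans (LinearMap.zero_apply x).symm)
  intro a
  refine ⟨(a * (f x₀)⁻¹) • x₀, ?_⟩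
  rw [map_smul, smul_eq_mul, mul_assoc, inv_mul_cancel₀ hx₀, mul_one]

lemma funct_card_eq (f : (Fin m → F4) →ₗ[F4] F4) (hf : f ≠ 0) (hm : 1 ≤ m) (a : F4) :
    (Finset.univ.filter fun x => f x = a).card = 4 ^ (m - 1) := by
  have h := fiber_count f (funct_surj f hf) a
  rw [F4card, cardFun] at h
  have hm4 : (4:ℕ) ^ m = 4 ^ (m - 1) * 4 := by
    calc (4:ℕ) ^ m = 4 ^ ((m-1)+1) := by congr 1; omega
      _ = 4 ^ (m-1) * 4 := by rw [pow_succ]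
  omega

lemma funct_card_ne (f : (Fin m → F4) →ₗ[F4] F4) (hf : f ≠ 0) (hm : 1 ≤ m) :
    (Finset.univ.filter fun x => f x ≠ 0).card = 3 * 4 ^ (m - 1) := by
  have h1 := funct_card_eq f hf hm 0
  have h2 := Finset.card_filter_add_card_filter_not
    (s := (Finset.univ : Finset (Fin m → F4))) (p := fun x => f x = 0)
  rw [Finset.card_univ, cardFun] at h2
  have hm4 : (4:ℕ) ^ m = 4 ^ (m - 1) * 4 := by
    calc (4:ℕ) ^ m = 4 ^ ((m-1)+1) := by congr 1; omega
      _ = 4 ^ (m-1) * 4 := by rw [pow_succ]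
  have h3 : (Finset.univ.filter fun x => ¬ f x = 0).card = 3 * 4 ^ (m-1) := by omega
  convert h3 using 2
end Functionals

section Dot
variable {m : ℕ}

/-- the linear functional `x ↦ ∑ i, x i * w i`. -/
noncomputable def dotL (w : Fin m → F4) : (Fin m → F4) →ₗ[F4] F4 where
  toFun x := ∑ i, x i * w i
  map_add' x y := by simp [add_mul, Finset.sum_add_distrib]
  map_smul' c x := by simp [Finset.mul_sum, mul_assoc]

@[simp] lemma dotL_apply (w x : Fin m → F4) : dotL w x = ∑ i, x i * w i := rfl

lemma dotL_single (w : Fin m → F4) (i : Fin m) : dotL w (Pi.single i 1) = w i := by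
  rw [dotL_apply, Finset.sum_eq_single i]
  · simp
  · intro j _ hj; simp [Pi.single_apply, hj]
  · intro h; exact absurd (Finset.mem_univ i) h

lemma dotL_ne_zero (w : Fin m → F4) (hw : w ≠ 0) : dotL w ≠ 0 := by
  intro h
  apply hw
  ext i
  have h2 := dotL_single w i
  rw [h] at h2
  simpa using h2.symm

lemma funct_factor (f g : (Fin m → F4) →ₗ[F4] F4) (hf : f ≠ 0)
    (h : ∀ x, f x = 0 → g x = 0) : ∃ c : F4, ∀ x, g x = c * f x := by
  obtain ⟨x₀, hx₀⟩ : ∃ x, f x ≠ 0 := by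
    by_contra hne
    push_neg at hne
    exact hf (LinearMap.ext fun x => (hne x).trans (LinearMap.zero_apply x).symm)
  refine ⟨g x₀ * (f x₀)⁻¹, fun x => ?_⟩
  have hker : f (x - (f x * (f x₀)⁻¹) • x₀) = 0 := by
    rw [map_sub, map_smul, smul_eq_mul, mul_assoc, inv_mul_cancel₀ hx₀, mul_one, sub_self]
  have h2 := h _ hker
  rw [map_sub, map_smul, smul_eq_mul, sub_eq_zero] at h2
  rw [h2]; ring

lemma pair_card (f g : (Fin m → F4) →ₗ[F4] F4) (hf : f ≠ 0)
    (hprop : ∀ c : F4, ∃ x, g x ≠ c * f x) (hm : 2 ≤ m) :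
    (Finset.univ.filter fun x => f x = 0 ∧ g x ≠ 0).card = 3 * 4 ^ (m - 2) := by
  have hg : g ≠ 0 := by
    intro h
    obtain ⟨x, hx⟩ := hprop 0
    rw [h] at hx; simp at hx
  obtain ⟨x₁, hx₁f, hx₁g⟩ : ∃ x, f x = 0 ∧ g x ≠ 0 := by
    by_contra hcon
    push_neg at hcon
    obtain ⟨c, hc⟩ := funct_factor f g hf hcon
    obtain ⟨x, hx⟩ := hprop c
    exact hx (hc x)
  obtain ⟨x₂, hx₂g, hx₂f⟩ : ∃ x, g x = 0 ∧ f x ≠ 0 := by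
    by_contra hcon
    push_neg at hcon
    obtain ⟨c, hc⟩ := funct_factor g f hg hcon
    have hc0 : c ≠ 0 := by
      intro h0
      exact hf (LinearMap.ext fun x => by rw [hc x, h0, zero_mul, LinearMap.zero_apply])
    refine absurd ?_ ((hprop c⁻¹).choose_spec)
    rw [hc (hprop c⁻¹).choose, ← mul_assoc, inv_mul_cancel₀ hc0, one_mul]
  set T : (Fin m → F4) →ₗ[F4] (F4 × F4) := f.prod g with hT
  have hTsurj : Function.Surjective T := by
    intro p
    refine ⟨(p.1 * (f x₂)⁻¹) • x₂ + (p.2 * (g x₁)⁻¹) • x₁, ?_⟩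
    have hTx2 : T x₂ = (f x₂, g x₂) := rfl
    have hTx1 : T x₁ = (f x₁, g x₁) := rfl
    have h1 : T ((p.1 * (f x₂)⁻¹) • x₂) = (p.1, 0) := by
      rw [map_smul, hTx2, Prod.smul_mk, smul_eq_mul, smul_eq_mul, hx₂g, mul_zero,
        mul_assoc, inv_mul_cancel₀ hx₂f, mul_one]
    have h2 : T ((p.2 * (g x₁)⁻¹) • x₁) = (0, p.2) := by
      rw [map_smul, hTx1, Prod.smul_mk, smul_eq_mul, smul_eq_mul, hx₁f, mul_zero,
        mul_assoc, inv_mul_cancel₀ hx₁g, mul_one]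
    rw [map_add, h1, h2]
    ext <;> simp
  have hfib : ∀ p : F4 × F4, (Finset.univ.filter fun x => T x = p).card = 4 ^ (m - 2) := by
    intro p
    have h := fiber_count T hTsurj p
    rw [cardFun, Fintype.card_prod, F4card] at h
    have hm4 : (4:ℕ) ^ m = 4 ^ (m - 2) * 16 := by
      calc (4:ℕ) ^ m = 4 ^ ((m-2)+2) := by congr 1; omega
        _ = 4 ^ (m-2) * 16 := by rw [pow_add]; norm_num
    omega
  have key : (Finset.univ.filter fun x => f x = 0 ∧ g x ≠ 0).card
      + (Finset.univ.filter fun x => T x = (0, 0)).card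
      = (Finset.univ.filter fun x => f x = 0).card := by
    have h1 : (Finset.univ.filter fun x => f x = 0 ∧ g x ≠ 0)
        = (Finset.univ.filter fun x => f x = 0).filter fun x => ¬ g x = 0 := by
      rw [Finset.filter_filter]
    have h2 : (Finset.univ.filter fun x => T x = (0, 0))
        = (Finset.univ.filter fun x => f x = 0).filter fun x => g x = 0 := by
      rw [Finset.filter_filter]
      apply Finset.filter_congr
      intro x _
      constructor
      · intro h; exact ⟨congrArg Prod.fst h, congrArg Prod.snd h⟩
      · intro ⟨h1', h2'⟩
        have : T x = (f x, g x) := rfl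
        rw [this, h1', h2']
    rw [h1, h2, add_comm]
    exact Finset.card_filter_add_card_filter_not (fun x => g x = 0)
  have hfcard := funct_card_eq f hf (by omega) 0
  have hT00 := hfib (0, 0)
  have hm4 : (4:ℕ) ^ (m-1) = 4 * 4 ^ (m - 2) := by
    calc (4:ℕ) ^ (m-1) = 4 ^ ((m-2)+1) := by congr 1; omega
      _ = 4 * 4 ^ (m-2) := by rw [pow_succ]; ring
  omega
end Dot

section PiSum
variable {m : ℕ}

lemma proj_surj (i : Fin m) :
    Function.Surjective (LinearMap.proj (R := F4) (φ := fun _ : Fin m => F4) i) := by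
  intro a
  exact ⟨Pi.single i a, by simp⟩

lemma projPair_surj {i j : Fin m} (hij : i ≠ j) :
    Function.Surjective ((LinearMap.proj (R := F4) (φ := fun _ : Fin m => F4) i).prod
      (LinearMap.proj j)) := by
  intro p
  refine ⟨fun t => if t = i then p.1 else if t = j then p.2 else 0, ?_⟩
  have h1 : (if i = i then p.1 else if i = j then p.2 else 0) = p.1 := by simp
  have h2 : (if j = i then p.1 else if j = j then p.2 else 0) = p.2 := by
    simp [hij.symm]
  exact Prod.ext h1 h2

/-- key computation : `∑ u, u i * (u j)^2 = 0` when `2 ≤ m`. -/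
lemma sum_ui_uj_sq (hm : 2 ≤ m) (i j : Fin m) :
    ∑ u : Fin m → F4, u i * (u j) ^ 2 = 0 := by
  by_cases hij : i = j
  · subst hij
    set P := LinearMap.proj (R := F4) (φ := fun _ : Fin m => F4) i with hP
    have hsum := Finset.sum_fiberwise_of_maps_to
      (s := (Finset.univ : Finset (Fin m → F4))) (t := (Finset.univ : Finset F4))
      (g := fun u : Fin m → F4 => P u)
      (fun u _ => Finset.mem_univ (P u)) (fun u => u i * (u i) ^ 2)
    rw [← hsum]
    have hconst : ∀ a : F4, ∑ u ∈ Finset.univ.filter (fun u : Fin m → F4 => P u = a),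
        u i * (u i) ^ 2 = (4 ^ (m - 1) : ℕ) • (a * a ^ 2) := by
      intro a
      have hPa : ∀ u ∈ Finset.univ.filter (fun u : Fin m → F4 => P u = a),
          u i * (u i) ^ 2 = a * a ^ 2 := by
        intro u hu
        have := (Finset.mem_filter.mp hu).2
        have hu' : u i = a := this
        rw [hu']
      rw [Finset.sum_congr rfl hPa, Finset.sum_const]
      congr 1
      have h := fiber_count P (proj_surj i) a
      rw [F4card, cardFun] at h
      have hm4 : (4:ℕ) ^ m = 4 ^ (m - 1) * 4 := by
        calc (4:ℕ) ^ m = 4 ^ ((m-1)+1) := by congr 1; omega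
          _ = 4 ^ (m-1) * 4 := by rw [pow_succ]
      omega
    have h3 : ∑ a : F4, a * a ^ 2 = 1 := by
      have h4 : ∀ a : F4, a * a ^ 2 = a ^ 3 := fun a => by ring
      rw [Finset.sum_congr rfl (fun a _ => h4 a), F4sumcube]
    calc ∑ a : F4, ∑ u ∈ Finset.univ.filter (fun u : Fin m → F4 => P u = a),
          u i * (u i) ^ 2
        = ∑ a : F4, (4 ^ (m - 1) : ℕ) • (a * a ^ 2) :=
          Finset.sum_congr rfl (fun a _ => hconst a)
      _ = (4 ^ (m - 1) : ℕ) • ∑ a : F4, (a * a ^ 2) := (Finset.smul_sum).symm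
      _ = 0 := by
          rw [h3, nsmul_eq_mul, mul_one, Nat.cast_pow, F4cast4]
          exact zero_pow (by omega)
  · set T := (LinearMap.proj (R := F4) (φ := fun _ : Fin m => F4) i).prod (LinearMap.proj j)
      with hT
    have hsum := Finset.sum_fiberwise_of_maps_to
      (s := (Finset.univ : Finset (Fin m → F4))) (t := (Finset.univ : Finset (F4 × F4)))
      (g := fun u : Fin m → F4 => T u)
      (fun u _ => Finset.mem_univ (T u)) (fun u => u i * (u j) ^ 2)
    rw [← hsum]
    have hconst : ∀ p : F4 × F4, ∑ u ∈ Finset.univ.filter (fun u : Fin m → F4 => T u = p),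
        u i * (u j) ^ 2 = (4 ^ (m - 2) : ℕ) • (p.1 * p.2 ^ 2) := by
      intro p
      have hPa : ∀ u ∈ Finset.univ.filter (fun u : Fin m → F4 => T u = p),
          u i * (u j) ^ 2 = p.1 * p.2 ^ 2 := by
        intro u hu
        have h := (Finset.mem_filter.mp hu).2
        have h1 : u i = p.1 := congrArg Prod.fst h
        have h2 : u j = p.2 := congrArg Prod.snd h
        rw [h1, h2]
      rw [Finset.sum_congr rfl hPa, Finset.sum_const]
      congr 1
      have h := fiber_count T (projPair_surj hij) p
      rw [Fintype.card_prod, F4card, cardFun] at h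
      have hm4 : (4:ℕ) ^ m = 4 ^ (m - 2) * 16 := by
        calc (4:ℕ) ^ m = 4 ^ ((m-2)+2) := by congr 1; omega
          _ = 4 ^ (m-2) * 16 := by rw [pow_add]; norm_num
      omega
    have h3 : ∑ p : F4 × F4, p.1 * p.2 ^ 2 = 0 := by
      rw [Fintype.sum_prod_type]
      have h4 : ∀ a : F4, ∑ b : F4, a * b ^ 2 = a * ∑ b : F4, b ^ 2 := fun a => by
        rw [Finset.mul_sum]
      rw [Finset.sum_congr rfl (fun a _ => h4 a), F4sumsq]
      simp
    calc ∑ p : F4 × F4, ∑ u ∈ Finset.univ.filter (fun u : Fin m → F4 => T u = p),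
          u i * (u j) ^ 2
        = ∑ p : F4 × F4, (4 ^ (m - 2) : ℕ) • (p.1 * p.2 ^ 2) :=
          Finset.sum_congr rfl (fun p _ => hconst p)
      _ = (4 ^ (m - 2) : ℕ) • ∑ p : F4 × F4, (p.1 * p.2 ^ 2) := (Finset.smul_sum).symm
      _ = 0 := by rw [h3, smul_zero]
end PiSum

section DotSum
variable {m : ℕ}

/-- `∑ u, (x·u)(x'·u)² = 0` for `2 ≤ m`. -/
lemma sum_dot_dot_sq (hm : 2 ≤ m) (x x' : Fin m → F4) :
    ∑ u : Fin m → F4, (dotL u x) * (dotL u x') ^ 2 = 0 := by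
  have hterm : ∀ u : Fin m → F4,
      (dotL u x) * (dotL u x') ^ 2 = ∑ i, ∑ j, (x i * (x' j) ^ 2) * (u i * (u j) ^ 2) := by
    intro u
    have hsq : (dotL u x') ^ 2 = ∑ j, (x' j) ^ 2 * (u j) ^ 2 := by
      rw [dotL_apply]
      have := map_sum (frobenius F4 2) (fun j => x' j * u j) Finset.univ
      simp only [frobenius_def] at this
      rw [this]
      exact Finset.sum_congr rfl fun j _ => by rw [mul_pow]
    rw [dotL_apply, hsq, Finset.sum_mul_sum]
    exact Finset.sum_congr rfl fun i _ => Finset.sum_congr rfl fun j _ => by ring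
  rw [Finset.sum_congr rfl (fun u _ => hterm u)]
  rw [Finset.sum_comm]
  refine Finset.sum_eq_zero fun i _ => ?_
  rw [Finset.sum_comm]
  refine Finset.sum_eq_zero fun j _ => ?_
  rw [← Finset.mul_sum, sum_ui_uj_sq hm i j, mul_zero]
end DotSum

section Classes
variable {m : ℕ}

/-- nonzero scalars of `F4`. -/
noncomputable def F4s : Finset F4 := Finset.univ.filter (fun c : F4 => c ≠ 0)

lemma F4s_card : F4s.card = 3 := by
  have h1 : (Finset.univ.filter (fun a : F4 => a = 0)).card = 1 := by
    have h0 : (Finset.univ.filter (fun a : F4 => a = 0)) = {0} := by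
      ext a; simp
    rw [h0, Finset.card_singleton]
  have h2 := Finset.card_filter_add_card_filter_not
    (s := (Finset.univ : Finset F4)) (p := fun a : F4 => a = 0)
  rw [Finset.card_univ, F4card] at h2
  have : F4s = Finset.univ.filter (fun a : F4 => ¬ a = 0) := rfl
  rw [this]
  omega

lemma mem_F4s {c : F4} : c ∈ F4s ↔ c ≠ 0 := by
  simp [F4s]

/-- the `F4*`-orbit of a vector, as a finset. -/
noncomputable def orb (v : Fin m → F4) : Finset (Fin m → F4) := F4s.image (fun c => c • v)

lemma orb_nonempty (v : Fin m → F4) : (orb v).Nonempty :=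
  ⟨(1 : F4) • v, Finset.mem_image.mpr ⟨1, mem_F4s.mpr one_ne_zero, rfl⟩⟩

lemma mem_orb {v w : Fin m → F4} : w ∈ orb v ↔ ∃ c : F4, c ≠ 0 ∧ w = c • v := by
  constructor
  · intro h
    obtain ⟨c, hc, hcv⟩ := Finset.mem_image.mp h
    exact ⟨c, mem_F4s.mp hc, hcv.symm⟩
  · intro ⟨c, hc, hcv⟩
    exact Finset.mem_image.mpr ⟨c, mem_F4s.mpr hc, hcv.symm⟩

lemma orb_smul {v : Fin m → F4} {c : F4} (hc : c ≠ 0) : orb (c • v) = orb v := by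
  ext w
  rw [mem_orb, mem_orb]
  constructor
  · intro ⟨d, hd, hw⟩
    exact ⟨d * c, mul_ne_zero hd hc, by rw [hw, smul_smul]⟩
  · intro ⟨d, hd, hw⟩
    exact ⟨d * c⁻¹, mul_ne_zero hd (inv_ne_zero hc), by rw [hw, smul_smul,
      mul_assoc, inv_mul_cancel₀ hc, mul_one]⟩

/-- a canonical representative of the orbit of `v`. -/
noncomputable def repFn (v : Fin m → F4) : Fin m → F4 :=
  (Fintype.equivFin (Fin m → F4)).symm
    (((orb v).image (Fintype.equivFin (Fin m → F4))).min'
      ((orb_nonempty v).image _))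

lemma repFn_mem (v : Fin m → F4) : repFn v ∈ orb v := by
  have h := Finset.min'_mem ((orb v).image (Fintype.equivFin (Fin m → F4)))
    ((orb_nonempty v).image _)
  obtain ⟨w, hw, hww⟩ := Finset.mem_image.mp h
  have : repFn v = w := by
    rw [repFn, ← hww, Equiv.symm_apply_apply]
  rwa [this]

lemma repFn_smul {v : Fin m → F4} {c : F4} (hc : c ≠ 0) : repFn (c • v) = repFn v := by
  unfold repFn
  simp only [orb_smul hc]

lemma repFn_spec (v : Fin m → F4) : ∃ c : F4, c ≠ 0 ∧ repFn v = c • v :=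
  mem_orb.mp (repFn_mem v)

lemma repFn_idem (v : Fin m → F4) : repFn (repFn v) = repFn v := by
  obtain ⟨c, hc, h⟩ := repFn_spec v
  rw [h, repFn_smul hc]
  exact h

lemma repFn_ne_zero {v : Fin m → F4} (hv : v ≠ 0) : repFn v ≠ 0 := by
  obtain ⟨c, hc, h⟩ := repFn_spec v
  rw [h]
  exact smul_ne_zero hc hv

lemma repFn_eq_iff {v w : Fin m → F4} (hv : v ≠ 0) :
    repFn v = repFn w ↔ ∃ c : F4, c ≠ 0 ∧ w = c • v := by
  constructor
  · intro h
    obtain ⟨c, hc, hcv⟩ := repFn_spec v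
    obtain ⟨d, hd, hdw⟩ := repFn_spec w
    have : c • v = d • w := by rw [← hcv, ← hdw, h]
    refine ⟨d⁻¹ * c, mul_ne_zero (inv_ne_zero hd) hc, ?_⟩
    rw [← smul_smul, this, smul_smul, inv_mul_cancel₀ hd, one_smul]
  · intro ⟨c, hc, hcv⟩
    rw [hcv, repFn_smul hc]

/-- nonzero vectors. -/
noncomputable def NZ (m : ℕ) : Finset (Fin m → F4) :=
  Finset.univ.filter (fun v : Fin m → F4 => v ≠ 0)

lemma mem_NZ {v : Fin m → F4} : v ∈ NZ m ↔ v ≠ 0 := by simp [NZ]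

/-- class representatives. -/
noncomputable def Reps (m : ℕ) : Finset (Fin m → F4) := (NZ m).image repFn

lemma mem_Reps_self {v : Fin m → F4} (hv : v ≠ 0) : repFn v ∈ Reps m :=
  Finset.mem_image.mpr ⟨v, mem_NZ.mpr hv, rfl⟩

lemma Reps_ne_zero {w : Fin m → F4} (hw : w ∈ Reps m) : w ≠ 0 := by
  obtain ⟨v, hv, hvw⟩ := Finset.mem_image.mp hw
  rw [← hvw]
  exact repFn_ne_zero (mem_NZ.mp hv)

lemma Reps_rep {w : Fin m → F4} (hw : w ∈ Reps m) : repFn w = w := by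
  obtain ⟨v, _, hvw⟩ := Finset.mem_image.mp hw
  rw [← hvw, repFn_idem]

lemma fiber_eq_orb {w : Fin m → F4} (hw : w ∈ Reps m) :
    (NZ m).filter (fun v => repFn v = w) = orb w := by
  ext v
  rw [Finset.mem_filter, mem_NZ, mem_orb]
  constructor
  · intro ⟨hv, hrv⟩
    exact (repFn_eq_iff (Reps_ne_zero hw)).mp ((Reps_rep hw).trans hrv.symm)
  · intro ⟨c, hc, hcv⟩
    have hv : v ≠ 0 := by
      rw [hcv]; exact smul_ne_zero hc (Reps_ne_zero hw)
    constructor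
    · exact hv
    · rw [hcv, repFn_smul hc, Reps_rep hw]

lemma orb_card {w : Fin m → F4} (hw : w ≠ 0) : (orb w).card = 3 := by
  rw [orb, Finset.card_image_of_injective _ ?_, F4s_card]
  intro c d hcd
  obtain ⟨i, hi⟩ : ∃ i, w i ≠ 0 := by
    by_contra h
    push_neg at h
    exact hw (funext h)
  have := congrFun hcd i
  simp only [Pi.smul_apply, smul_eq_mul] at this
  exact mul_right_cancel₀ hi this

/-- sums of orbit-invariant functions over nonzero vectors split over classes. -/
lemma sum_classes {M : Type} [AddCommMonoid M] (f : (Fin m → F4) → M)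
    (hf : ∀ (c : F4), c ≠ 0 → ∀ v, f (c • v) = f v) :
    ∑ v ∈ NZ m, f v = ∑ w ∈ Reps m, 3 • f w := by
  have hmaps : ∀ v ∈ NZ m, repFn v ∈ Reps m := fun v hv =>
    mem_Reps_self (mem_NZ.mp hv)
  rw [← Finset.sum_fiberwise_of_maps_to hmaps f]
  refine Finset.sum_congr rfl fun w hw => ?_
  rw [fiber_eq_orb hw]
  have hconst : ∀ v ∈ orb w, f v = f w := by
    intro v hv
    obtain ⟨c, hc, hcv⟩ := mem_orb.mp hv
    rw [hcv, hf c hc w]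
  rw [Finset.sum_congr rfl hconst, Finset.sum_const, orb_card (Reps_ne_zero hw)]

lemma NZ_card : (NZ m).card = 4 ^ m - 1 := by
  have h1 : (Finset.univ.filter (fun v : Fin m → F4 => v = 0)).card = 1 := by
    have h0 : (Finset.univ.filter (fun v : Fin m → F4 => v = 0)) = {0} := by
      ext v; simp
    rw [h0, Finset.card_singleton]
  have h2 := Finset.card_filter_add_card_filter_not
    (s := (Finset.univ : Finset (Fin m → F4))) (p := fun v : Fin m → F4 => v = 0)
  rw [Finset.card_univ, cardFun] at h2
  have h3 : (NZ m).card = (Finset.univ.filter (fun v : Fin m → F4 => ¬ v = 0)).card := rfl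
  omega

lemma Reps_card_mul : 3 * (Reps m).card = 4 ^ m - 1 := by
  have h := sum_classes (m := m) (fun _ => (1 : ℕ)) (fun c _ v => rfl)
  simp only [Finset.sum_const, smul_eq_mul, mul_one] at h
  rw [NZ_card] at h
  omega

end Classes


section MainProof
open Finset

lemma three_nsmul_F4 (z : F4) : (3:ℕ) • z = z := by
  have h2 : (2:ℕ) • z = 0 := by
    rw [show (2:ℕ) • z = z + z from two_nsmul z]
    exact F4addself z
  rw [show (3:ℕ) = 2 + 1 from rfl, add_nsmul, h2, one_nsmul, zero_add]

lemma wt_eq_sum {N : ℕ} (y : Fin N → F4) :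
    wt y = ∑ j, if y j ≠ 0 then 1 else 0 := by
  rw [wt, Finset.card_filter]

lemma wt_zero {N : ℕ} : wt (0 : Fin N → F4) = 0 := by
  rw [wt]
  simp

lemma NZ_eq_erase {m : ℕ} : NZ m = Finset.univ.erase 0 := by
  ext v
  simp [NZ, Finset.mem_erase, and_comm]

end MainProof


set_option maxHeartbeats 2000000 in
/-- if `4·r₄(n,k,α) ≥ k`, `k ≥ 3`, `4α - 3n ≥ 1`, and there is no quaternary
Hermitian LCD `[4r, k, 3r]` code (with `r = r₄(n,k,α)`) whose Hermitian dual has no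
weight-1 vector, then there is no quaternary Hermitian LCD `[n,k,α]` code whose Hermitian
dual has no weight-1 vector. -/
theorem stmt8 (n k α r : ℕ) (hn : 1 ≤ n) (hk : 3 ≤ k) (hα : 1 ≤ α)
    (h1 : 1 ≤ 4 * (α : ℤ) - 3 * (n : ℤ))
    (hr : (r : ℤ) = 4 ^ (k - 1) * (n : ℤ) - (((4 ^ k - 1) / 3 : ℕ) : ℤ) * (α : ℤ))
    (h2 : k ≤ 4 * r)
    (h0 : ¬ ∃ C₀ : Submodule F4 (Fin (4 * r) → F4),
      IsHermLCDCode (4 * r) k (3 * r) C₀ ∧ ∀ x, inHermDual C₀ x → wt x ≠ 1) :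
    ¬ ∃ C : Submodule F4 (Fin n → F4),
      IsHermLCDCode n k α C ∧ ∀ x, inHermDual C x → wt x ≠ 1 := by
  intro hC
  obtain ⟨C, ⟨hCrank, hCLCD, hCmin⟩, hCdual⟩ := hC
  apply h0
  classical
  -- ARITHMETIC SETUP
  have hk1 : 1 ≤ k := by omega
  have hr1 : 1 ≤ r := by omega
  set g' : ℕ := (4 ^ k - 1) / 3 with hg'
  have hdvd : 3 ∣ 4 ^ k - 1 := by
    have hmod : 4 ^ k % 3 = 1 := by
      rw [Nat.pow_mod]
      simp
    have h4k1 : 1 ≤ 4 ^ k := Nat.one_le_pow _ _ (by norm_num)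
    omega
  have hg3 : 3 * g' = 4 ^ k - 1 := Nat.mul_div_cancel' hdvd
  have h4k1 : 1 ≤ 4 ^ k := Nat.one_le_pow _ _ (by norm_num)
  have hgZ : 3 * (g' : ℤ) = 4 ^ k - 1 := by
    have := congrArg (fun t : ℕ => (t : ℤ)) hg3
    push_cast [h4k1] at this
    convert this using 2 <;> push_cast <;> omega
  set s' : ℕ := 4 * α - 3 * n with hs'
  have hsZ : (s' : ℤ) = 4 * (α : ℤ) - 3 * (n : ℤ) := by
    have h3n : 3 * n ≤ 4 * α := by
      have : (3 * n : ℤ) ≤ 4 * α := by linarith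
      exact_mod_cast this
    omega
  have hs1 : 1 ≤ s' := by omega
  have h4k4 : (4:ℤ) ^ k = 4 * 4 ^ (k - 1) := by
    calc (4:ℤ) ^ k = 4 ^ ((k-1)+1) := by congr 1; omega
      _ = 4 * 4 ^ (k-1) := by rw [pow_succ]; ring
  have h4k4' : (4:ℤ) ^ (k-1) = 4 * 4 ^ (k - 2) := by
    calc (4:ℤ) ^ (k-1) = 4 ^ ((k-2)+1) := by congr 1; omega
      _ = 4 * 4 ^ (k-2) := by rw [pow_succ]; ring
  have Key1Z : (α : ℤ) = 3 * r + s' * 4 ^ (k-1) := by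
    linear_combination (-3 : ℤ) * hr - (4:ℤ)^(k-1) * hsZ + (α : ℤ) * hgZ + (α:ℤ) * h4k4
  have Key2Z : (n : ℤ) = 4 * r + s' * g' := by
    linear_combination (-4 : ℤ) * hr - (g' : ℤ) * hsZ + (n : ℤ) * hgZ + (n:ℤ) * h4k4
  set q : ℕ := s' * 4 ^ (k - 1) with hq
  have Key1 : α = 3 * r + q := by
    have : (α : ℤ) = 3 * r + (q : ℤ) := by push_cast [hq]; linarith [Key1Z]
    exact_mod_cast this
  have Key2 : n = 4 * r + s' * g' := by
    have : (n : ℤ) = 4 * r + ((s' * g' : ℕ) : ℤ) := by push_cast; linarith [Key2Z]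
    exact_mod_cast this
  -- GENERATOR MATRIX
  let b : Module.Basis (Fin k) F4 ↥C := (Module.finBasis F4 ↥C).reindex (finCongr hCrank)
  set G : Fin k → (Fin n → F4) := fun i => (b i : Fin n → F4) with hGdef
  have hGmem : ∀ i, G i ∈ C := fun i => (b i).2
  have hGind : LinearIndependent F4 G := by
    have h1 := b.linearIndependent
    exact h1.map' C.subtype C.ker_subtype
  have hGindFun := Fintype.linearIndependent_iff.mp hGind
  set col : Fin n → (Fin k → F4) := fun j i => G i j with hcoldef
  set enc : (Fin k → F4) → (Fin n → F4) := fun x => ∑ i, x i • G i with hencdef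
  have henc_mem : ∀ x, enc x ∈ C := fun x =>
    Submodule.sum_mem _ (fun i _ => Submodule.smul_mem _ _ (hGmem i))
  have henc_apply : ∀ x j, enc x j = dotL (col j) x := by
    intro x j
    rw [hencdef, dotL_apply]
    simp only [Finset.sum_apply, Pi.smul_apply, smul_eq_mul]
    rfl
  have henc_zero : enc 0 = 0 := by
    rw [hencdef]
    simp
  have henc_eq_zero : ∀ x, enc x = 0 → x = 0 := by
    intro x hx
    funext i
    exact hGindFun x hx i
  have hGspan : ∀ y ∈ C, ∃ x, y = enc x := by
    intro y hy
    have hmem : (⟨y, hy⟩ : ↥C) ∈ Submodule.span F4 (Set.range b) := by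
      rw [b.span_eq]; trivial
    obtain ⟨c, hc⟩ := (Submodule.mem_span_range_iff_exists_fun F4).mp hmem
    refine ⟨c, ?_⟩
    have h2 := congrArg (fun z : ↥C => (z : Fin n → F4)) hc
    simp only at h2
    rw [← h2, hencdef]
    push_cast
    rfl
  -- COLUMNS ARE NONZERO
  have hcol_ne : ∀ j, col j ≠ 0 := by
    intro j hj0
    set e1 : Fin n → F4 := Pi.single j (1:F4) with he1
    have hwt1 : wt e1 = 1 := by
      rw [wt]
      have hfil : (Finset.univ.filter fun t => e1 t ≠ 0) = {j} := by
        ext t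
        by_cases h : t = j <;> simp [h, he1, Pi.single_apply]
      rw [hfil, Finset.card_singleton]
    apply hCdual e1 ?_ hwt1
    intro y hy
    obtain ⟨x, hx⟩ := hGspan y hy
    rw [hermInner]
    rw [Finset.sum_eq_single j]
    · have hyj : y j = 0 := by
        rw [hx, henc_apply]
        rw [hj0]
        simp [dotL_apply]
      rw [hyj]
      ring
    · intro t _ ht
      rw [he1, Pi.single_apply]
      simp [ht]
    · intro h; exact absurd (Finset.mem_univ j) h
  -- WEIGHT FACTS
  have hdot_ne : ∀ j, dotL (col j) ≠ 0 := fun j => dotL_ne_zero _ (hcol_ne j)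
  have hwt_ge : ∀ x : Fin k → F4, x ≠ 0 → α ≤ wt (enc x) := by
    intro x hx
    refine hCmin.2 (enc x) (henc_mem x) ?_
    intro h0
    exact hx (henc_eq_zero x h0)
  have hwtenc : ∀ x, wt (enc x) = ∑ j, if dotL (col j) x ≠ 0 then 1 else 0 := by
    intro x
    rw [wt_eq_sum]
    exact Finset.sum_congr rfl fun j _ => by rw [henc_apply]
  have hW3 : ∑ x : Fin k → F4, wt (enc x) = n * (3 * 4 ^ (k-1)) := by
    rw [Finset.sum_congr rfl (fun x _ => hwtenc x), Finset.sum_comm]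
    have h2 : ∀ j : Fin n, (∑ x : Fin k → F4, if dotL (col j) x ≠ 0 then 1 else 0)
        = 3 * 4 ^ (k-1) := by
      intro j
      rw [← Finset.card_filter]
      exact funct_card_ne _ (hdot_ne j) (by omega)
    rw [Finset.sum_congr rfl (fun j _ => h2 j), Finset.sum_const, Finset.card_univ,
      Fintype.card_fin, smul_eq_mul]
  -- EVERY PROJECTIVE CLASS CONTAINS AT LEAST s' COLUMNS
  have hdotsmul : ∀ (c : F4) (v x : Fin k → F4), dotL (c • v) x = c * dotL v x := by
    intro c v x
    rw [dotL_apply, dotL_apply, Finset.mul_sum]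
    exact Finset.sum_congr rfl fun i _ => by simp [Pi.smul_apply, smul_eq_mul]; ring
  have hmle : ∀ w, (Finset.univ.filter fun j : Fin n => repFn (col j) = w).card ≤ n := by
    intro w
    refine le_trans (Finset.card_filter_le _ _) ?_
    rw [Finset.card_univ, Fintype.card_fin]
  have hm_ge : ∀ w ∈ Reps k, s' ≤ (Finset.univ.filter fun j : Fin n => repFn (col j) = w).card := by
    intro w hw
    have hwne := Reps_ne_zero hw
    have hdw : dotL w ≠ 0 := dotL_ne_zero _ hwne
    set mw := (Finset.univ.filter fun j : Fin n => repFn (col j) = w).card with hmw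
    have hI2 : ∑ x ∈ Finset.univ.filter (fun x : Fin k → F4 => dotL w x = 0), wt (enc x)
        = (n - mw) * (3 * 4 ^ (k-2)) := by
      rw [Finset.sum_congr rfl (fun x _ => hwtenc x), Finset.sum_comm]
      have h2 : ∀ j : Fin n,
          (∑ x ∈ Finset.univ.filter (fun x : Fin k → F4 => dotL w x = 0),
            if dotL (col j) x ≠ 0 then 1 else 0)
          = if repFn (col j) = w then 0 else 3 * 4 ^ (k-2) := by
        intro j
        by_cases hj : repFn (col j) = w
        · rw [if_pos hj]
          apply Finset.sum_eq_zero
          intro x hx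
          obtain ⟨c, hc, hcol⟩ := repFn_spec (col j)
          have hwc : w = c • col j := by rw [← hj, hcol]
          have hdx : dotL w x = c * dotL (col j) x := by rw [hwc, hdotsmul]
          have hx0 := (Finset.mem_filter.mp hx).2
          have hz : dotL (col j) x = 0 := by
            rcases mul_eq_zero.mp (hdx ▸ hx0) with h | h
            · exact absurd h hc
            · exact h
          simp [hz]
        · rw [if_neg hj]
          have hcnt := pair_card (dotL w) (dotL (col j)) hdw ?_ (by omega)
          · rw [← hcnt, Finset.card_filter, Finset.sum_filter]
            refine Finset.sum_congr rfl fun x _ => ?_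
            split_ifs <;> first | rfl | (exfalso; tauto)
          · intro c
            by_contra hcon
            push_neg at hcon
            have hcolj : col j = c • w := by
              funext i
              have := hcon (Pi.single i 1)
              rw [dotL_single, dotL_single] at this
              simpa [Pi.smul_apply, smul_eq_mul] using this
            have hc0 : c ≠ 0 := by
              intro h0
              rw [h0, zero_smul] at hcolj
              exact hcol_ne j hcolj
            apply hj
            rw [hcolj, repFn_smul hc0, Reps_rep hw]
      rw [Finset.sum_congr rfl (fun j _ => h2 j), Finset.sum_ite, Finset.sum_const,
        Finset.sum_const, smul_zero, zero_add, smul_eq_mul]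
      have hsplitcard := Finset.card_filter_add_card_filter_not
        (s := (Finset.univ : Finset (Fin n))) (p := fun j : Fin n => repFn (col j) = w)
      rw [Finset.card_univ, Fintype.card_fin] at hsplitcard
      have : (Finset.univ.filter fun j : Fin n => ¬ repFn (col j) = w).card = n - mw := by
        omega
      rw [this]
    have hI3 : α * (3 * 4 ^ (k-1)) ≤
        ∑ x ∈ Finset.univ.filter (fun x : Fin k → F4 => ¬ dotL w x = 0), wt (enc x) := by
      have hcardne : (Finset.univ.filter fun x : Fin k → F4 => ¬ dotL w x = 0).card
          = 3 * 4 ^ (k-1) := funct_card_ne _ hdw (by omega)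
      have hge : ∀ x ∈ Finset.univ.filter (fun x : Fin k → F4 => ¬ dotL w x = 0),
          α ≤ wt (enc x) := by
        intro x hx
        refine hwt_ge x ?_
        intro hx0
        have := (Finset.mem_filter.mp hx).2
        rw [hx0] at this
        exact this (map_zero _)
      calc α * (3 * 4 ^ (k-1))
          = ∑ _x ∈ Finset.univ.filter (fun x : Fin k → F4 => ¬ dotL w x = 0), α := by
            rw [Finset.sum_const, hcardne, smul_eq_mul, mul_comm]
        _ ≤ _ := Finset.sum_le_sum hge
    have hsplit := Finset.sum_filter_add_sum_filter_not Finset.univ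
      (fun x : Fin k → F4 => dotL w x = 0) (fun x => wt (enc x))
    rw [hW3, hI2] at hsplit
    -- numeric concluding step
    have hineq : (n - mw) * (3 * 4 ^ (k-2)) + α * (3 * 4 ^ (k-1)) ≤ n * (3 * 4 ^ (k-1)) := by
      omega
    have hA2pos : (0:ℤ) < 4 ^ (k-2) := pow_pos (by norm_num) _
    have hineqZ : ((n:ℤ) - mw) * (3 * 4 ^ (k-2)) + (α:ℤ) * (3 * 4 ^ (k-1))
        ≤ (n:ℤ) * (3 * 4 ^ (k-1)) := by
      have hc1 : ((n - mw : ℕ) : ℤ) = (n:ℤ) - mw := by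
        have := hmle w
        omega
      rw [← hc1]
      exact_mod_cast hineq
    have h7 : ((n:ℤ) - mw) ≤ 4 * ((n:ℤ) - α) := by
      have h8 : (3 * (4:ℤ)^(k-2)) * ((n:ℤ) - mw) ≤ (3 * (4:ℤ)^(k-2)) * (4 * ((n:ℤ) - α)) := by
        rw [h4k4'] at hineqZ
        linarith [hineqZ]
      exact le_of_mul_le_mul_left h8 (by positivity)
    have h9 : (s' : ℤ) ≤ (mw : ℤ) := by
      rw [hsZ]
      linarith [h7]
    exact_mod_cast h9
  -- CHOOSE s' COLUMNS FROM EACH CLASS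
  have hchoice : ∀ w : Fin k → F4, ∃ t : Finset (Fin n),
      t ⊆ Finset.univ.filter (fun j => repFn (col j) = w) ∧ (w ∈ Reps k → t.card = s') := by
    intro w
    by_cases hw : w ∈ Reps k
    · obtain ⟨t, ht1, ht2⟩ := Finset.exists_subset_card_eq (hm_ge w hw)
      exact ⟨t, ht1, fun _ => ht2⟩
    · exact ⟨∅, Finset.empty_subset _, fun h => absurd h hw⟩
  choose Dw hDsub hDcard using hchoice
  have hfib_of_mem : ∀ {w : Fin k → F4} {j : Fin n}, j ∈ Dw w → repFn (col j) = w := by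
    intro w j hj
    exact (Finset.mem_filter.mp (hDsub w hj)).2
  have hdisj : ∀ w ∈ Reps k, ∀ w' ∈ Reps k, w ≠ w' → Disjoint (Dw w) (Dw w') := by
    intro w _ w' _ hne
    rw [Finset.disjoint_left]
    intro j hj hj'
    exact hne ((hfib_of_mem hj).symm.trans (hfib_of_mem hj'))
  set D : Finset (Fin n) := (Reps k).biUnion Dw with hD
  have hRepsCard : (Reps k).card = g' := by
    have h3 := Reps_card_mul (m := k)
    omega
  have hDcardTot : D.card = g' * s' := by
    rw [hD, Finset.card_biUnion hdisj,
      Finset.sum_congr rfl (fun w hw => hDcard w hw), Finset.sum_const, smul_eq_mul,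
      hRepsCard]
  set K : Finset (Fin n) := Finset.univ \ D with hK
  have hKcard : K.card = 4 * r := by
    rw [hK, Finset.card_sdiff_of_subset (Finset.subset_univ D), Finset.card_univ, Fintype.card_fin,
      hDcardTot]
    have hsg : g' * s' = s' * g' := Nat.mul_comm _ _
    omega
  -- RESTRICTION TO THE KEPT COORDINATES
  set ee : Fin (4*r) ≃ {j // j ∈ K} := (finCongr hKcard.symm).trans K.equivFin.symm
    with heedef
  set restr : (Fin n → F4) →ₗ[F4] (Fin (4*r) → F4) :=
    LinearMap.funLeft F4 F4 (fun t : Fin (4*r) => (ee t : Fin n)) with hrestrdef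
  have hsumKN : ∀ F : Fin n → ℕ, (∑ t : Fin (4*r), F ((ee t : Fin n))) = ∑ j ∈ K, F j := by
    intro F
    rw [← Finset.sum_coe_sort K F]
    exact Equiv.sum_comp ee (fun j : {j // j ∈ K} => F j)
  have hsumKF : ∀ F : Fin n → F4, (∑ t : Fin (4*r), F ((ee t : Fin n))) = ∑ j ∈ K, F j := by
    intro F
    rw [← Finset.sum_coe_sort K F]
    exact Equiv.sum_comp ee (fun j : {j // j ∈ K} => F j)
  have hwt_restr : ∀ y : Fin n → F4,
      wt (restr y) = ∑ j ∈ K, (if y j ≠ 0 then 1 else 0) := by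
    intro y
    rw [wt_eq_sum, ← hsumKN (fun j => if y j ≠ 0 then 1 else 0)]
    refine Finset.sum_congr rfl fun t _ => ?_
    simp only [hrestrdef, LinearMap.funLeft_apply]
  have hwt_split : ∀ y : Fin n → F4,
      wt y = (∑ j ∈ K, if y j ≠ 0 then 1 else 0) + ∑ j ∈ D, (if y j ≠ 0 then 1 else 0) := by
    intro y
    rw [wt_eq_sum, ← Finset.sum_sdiff (Finset.subset_univ D)]
  -- DELETED PART OF THE WEIGHT
  have hDsum : ∀ x : Fin k → F4, x ≠ 0 →
      (∑ j ∈ D, if enc x j ≠ 0 then 1 else 0) = q := by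
    intro x hx
    have hcomm : ∀ v : Fin k → F4, dotL v x = dotL x v := by
      intro v
      rw [dotL_apply, dotL_apply]
      exact Finset.sum_congr rfl fun i _ => mul_comm _ _
    rw [hD, Finset.sum_biUnion hdisj]
    have hinner : ∀ w ∈ Reps k, (∑ j ∈ Dw w, if enc x j ≠ 0 then 1 else 0)
        = s' * (if dotL w x ≠ 0 then 1 else 0) := by
      intro w hw
      have hterm : ∀ j ∈ Dw w,
          (if enc x j ≠ 0 then (1:ℕ) else 0) = (if dotL w x ≠ 0 then (1:ℕ) else 0) := by
        intro j hj
        have hjf := hfib_of_mem hj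
        obtain ⟨c, hc, hcolj⟩ := repFn_spec (col j)
        have hwc : w = c • col j := by rw [← hjf, hcolj]
        have hdx : dotL w x = c * dotL (col j) x := by rw [hwc, hdotsmul]
        have hiff : (enc x j ≠ 0) ↔ (dotL w x ≠ 0) := by
          rw [henc_apply, hdx]
          constructor
          · intro h hc0
            rcases mul_eq_zero.mp hc0 with h' | h'
            · exact hc h'
            · exact h h'
          · intro h h0
            exact h (by rw [h0, mul_zero])
        by_cases hcase : dotL w x ≠ 0
        · rw [if_pos hcase, if_pos (hiff.mpr hcase)]
        · rw [if_neg hcase, if_neg (fun h => hcase (hiff.mp h))]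
      rw [Finset.sum_congr rfl hterm, Finset.sum_const, hDcard w hw, smul_eq_mul]
    rw [Finset.sum_congr rfl hinner, ← Finset.mul_sum]
    have hcnt : (∑ w ∈ Reps k, if dotL w x ≠ 0 then (1:ℕ) else 0) = 4 ^ (k-1) := by
      have hinv : ∀ (c : F4), c ≠ 0 → ∀ v : Fin k → F4,
          (if dotL (c • v) x ≠ 0 then (1:ℕ) else 0) = (if dotL v x ≠ 0 then (1:ℕ) else 0) := by
        intro c hc v
        have hdx : dotL (c • v) x = c * dotL v x := hdotsmul c v x
        by_cases hcase : dotL v x ≠ 0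
        · rw [if_pos hcase, if_pos (by rw [hdx]; exact mul_ne_zero hc hcase)]
        · push_neg at hcase
          rw [if_neg (by rw [hdx, hcase, mul_zero]; simp), if_neg (by simp [hcase])]
      have hclass := sum_classes (m := k) (fun v => if dotL v x ≠ 0 then (1:ℕ) else 0) hinv
      have hNZsum : ∑ v ∈ NZ k, (if dotL v x ≠ 0 then (1:ℕ) else 0) = 3 * 4 ^ (k-1) := by
        rw [NZ_eq_erase]
        have h0term : (if dotL (0 : Fin k → F4) x ≠ 0 then (1:ℕ) else 0) = 0 := by
          have hz : dotL (0 : Fin k → F4) x = 0 := by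
            rw [dotL_apply]
            simp
          simp [hz]
        have hall : ∑ v : Fin k → F4, (if dotL v x ≠ 0 then (1:ℕ) else 0) = 3 * 4 ^ (k-1) := by
          have hrw : ∀ v : Fin k → F4,
              (if dotL v x ≠ 0 then (1:ℕ) else 0) = (if dotL x v ≠ 0 then (1:ℕ) else 0) := by
            intro v
            rw [hcomm v]
          rw [Finset.sum_congr rfl (fun v _ => hrw v), ← Finset.card_filter]
          exact funct_card_ne (dotL x) (dotL_ne_zero x hx) (by omega)
        have hsplit0 : (if dotL (0 : Fin k → F4) x ≠ 0 then (1:ℕ) else 0)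
            + ∑ v ∈ Finset.univ.erase (0 : Fin k → F4), (if dotL v x ≠ 0 then (1:ℕ) else 0)
            = ∑ v : Fin k → F4, (if dotL v x ≠ 0 then (1:ℕ) else 0) :=
          Finset.add_sum_erase _ (fun v => if dotL v x ≠ 0 then (1:ℕ) else 0)
            (Finset.mem_univ _)
        rw [hall, h0term, zero_add] at hsplit0
        exact hsplit0
      rw [hclass] at hNZsum
      have hpull : ∑ w ∈ Reps k, (3:ℕ) • (if dotL w x ≠ 0 then (1:ℕ) else 0)
          = 3 * ∑ w ∈ Reps k, (if dotL w x ≠ 0 then (1:ℕ) else 0) := by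
        rw [Finset.mul_sum]
        exact Finset.sum_congr rfl fun w _ => by rw [smul_eq_mul]
      rw [hpull] at hNZsum
      omega
    rw [hcnt, hq]
  -- THE WEIGHT RELATION
  have hwt_rel : ∀ x : Fin k → F4, x ≠ 0 → wt (enc x) = wt (restr (enc x)) + q := by
    intro x hx
    rw [hwt_split (enc x), hwt_restr (enc x), hDsum x hx]
  -- HERMITIAN INNER PRODUCT PRESERVED
  have hherm_restr : ∀ y z : Fin n → F4,
      hermInner (restr y) (restr z) = ∑ j ∈ K, y j * (z j) ^ 2 := by
    intro y z
    rw [hermInner, ← hsumKF (fun j => y j * (z j) ^ 2)]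
    refine Finset.sum_congr rfl fun t _ => ?_
    simp only [hrestrdef, LinearMap.funLeft_apply]
  have hherm_split : ∀ y z : Fin n → F4,
      hermInner y z = (∑ j ∈ K, y j * (z j) ^ 2) + ∑ j ∈ D, y j * (z j) ^ 2 := by
    intro y z
    rw [hermInner, ← Finset.sum_sdiff (Finset.subset_univ D)]
  have hDherm : ∀ x x' : Fin k → F4, (∑ j ∈ D, enc x j * (enc x' j) ^ 2) = 0 := by
    intro x x'
    rw [hD, Finset.sum_biUnion hdisj]
    have hinner : ∀ w ∈ Reps k, (∑ j ∈ Dw w, enc x j * (enc x' j) ^ 2)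
        = s' • (dotL w x * (dotL w x') ^ 2) := by
      intro w hw
      have hterm : ∀ j ∈ Dw w, enc x j * (enc x' j) ^ 2 = dotL w x * (dotL w x') ^ 2 := by
        intro j hj
        have hjf := hfib_of_mem hj
        obtain ⟨c, hc, hcolj⟩ := repFn_spec (col j)
        have hwc : w = c • col j := by rw [← hjf, hcolj]
        have hdx : dotL w x = c * dotL (col j) x := by rw [hwc, hdotsmul]
        have hdx' : dotL w x' = c * dotL (col j) x' := by rw [hwc, hdotsmul]
        rw [henc_apply, henc_apply, hdx, hdx']
        have hc3 : c ^ 3 = 1 := F4cube c hc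
        linear_combination (- (dotL (col j) x * (dotL (col j) x') ^ 2)) * hc3
      rw [Finset.sum_congr rfl hterm, Finset.sum_const, hDcard w hw]
    rw [Finset.sum_congr rfl hinner, ← Finset.smul_sum]
    have hcls : (∑ w ∈ Reps k, dotL w x * (dotL w x') ^ 2) = 0 := by
      have hinv : ∀ (c : F4), c ≠ 0 → ∀ v : Fin k → F4,
          dotL (c • v) x * (dotL (c • v) x') ^ 2 = dotL v x * (dotL v x') ^ 2 := by
        intro c hc v
        rw [hdotsmul, hdotsmul]
        have hc3 : c ^ 3 = 1 := F4cube c hc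
        linear_combination (dotL v x * (dotL v x') ^ 2) * hc3
      have hclass := sum_classes (m := k) (fun v => dotL v x * (dotL v x') ^ 2) hinv
      have hall : ∑ v : Fin k → F4, dotL v x * (dotL v x') ^ 2 = 0 :=
        sum_dot_dot_sq (by omega) x x'
      have h0t : dotL (0 : Fin k → F4) x * (dotL (0 : Fin k → F4) x') ^ 2 = 0 := by
        have hz : dotL (0 : Fin k → F4) x = 0 := by
          rw [dotL_apply]; simp
        rw [hz, zero_mul]
      have hNZsum : ∑ v ∈ NZ k, dotL v x * (dotL v x') ^ 2 = 0 := by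
        rw [NZ_eq_erase]
        have hsplit0 : dotL (0 : Fin k → F4) x * (dotL (0 : Fin k → F4) x') ^ 2
            + ∑ v ∈ Finset.univ.erase (0 : Fin k → F4), dotL v x * (dotL v x') ^ 2
            = ∑ v : Fin k → F4, dotL v x * (dotL v x') ^ 2 :=
          Finset.add_sum_erase _ (fun v => dotL v x * (dotL v x') ^ 2) (Finset.mem_univ _)
        rw [hall, h0t, zero_add] at hsplit0
        exact hsplit0
      rw [hclass, Finset.sum_congr rfl (fun w _ => three_nsmul_F4 _)] at hNZsum
      exact hNZsum
    rw [hcls, smul_zero]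
  have hherm_enc : ∀ x x' : Fin k → F4,
      hermInner (enc x) (enc x') = hermInner (restr (enc x)) (restr (enc x')) := by
    intro x x'
    rw [hherm_split (enc x) (enc x'), hherm_restr (enc x) (enc x'), hDherm x x', add_zero]
  -- THE NEW CODE
  set v0 : Fin k → (Fin (4*r) → F4) := fun i => restr (G i) with hv0
  set C₀ : Submodule F4 (Fin (4*r) → F4) := Submodule.span F4 (Set.range v0) with hC₀
  have hrestr_enc : ∀ x : Fin k → F4, restr (enc x) = ∑ i, x i • v0 i := by
    intro x
    have h1 : enc x = ∑ i, x i • G i := by rw [hencdef]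
    rw [h1, map_sum]
    exact Finset.sum_congr rfl fun i _ => by rw [map_smul]
  have hmemC₀ : ∀ y, y ∈ C₀ ↔ ∃ x, restr (enc x) = y := by
    intro y
    rw [hC₀, Submodule.mem_span_range_iff_exists_fun]
    constructor
    · intro ⟨c, hcy⟩
      exact ⟨c, by rw [hrestr_enc]; exact hcy⟩
    · intro ⟨c, hcy⟩
      exact ⟨c, by rw [← hrestr_enc]; exact hcy⟩
  have hwt0_ge : ∀ x : Fin k → F4, x ≠ 0 → 3 * r ≤ wt (restr (enc x)) := by
    intro x hx
    have hrel := hwt_rel x hx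
    have hge := hwt_ge x hx
    omega
  have hne0 : ∀ x : Fin k → F4, x ≠ 0 → restr (enc x) ≠ 0 := by
    intro x hx h0'
    have hge := hwt0_ge x hx
    rw [h0', wt_zero] at hge
    omega
  have hv0ind : LinearIndependent F4 v0 := by
    rw [Fintype.linearIndependent_iff]
    intro g hg i
    by_contra hgi
    have hgne : g ≠ 0 := fun h => hgi (by rw [h]; rfl)
    exact hne0 g hgne (by rw [hrestr_enc]; exact hg)
  have hC₀rank : Module.finrank F4 ↥C₀ = k := by
    rw [hC₀, finrank_span_eq_card hv0ind, Fintype.card_fin]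
  have hC₀LCD : IsHermLCD C₀ := by
    intro y hy hdual
    obtain ⟨x, hxy⟩ := (hmemC₀ y).mp hy
    have hencC : enc x ∈ C := henc_mem x
    have hdualC : inHermDual C (enc x) := by
      intro z hz
      obtain ⟨x', hx'⟩ := hGspan z hz
      rw [hx', hherm_enc, hxy]
      exact hdual (restr (enc x')) ((hmemC₀ _).mpr ⟨x', rfl⟩)
    have hx0 := hCLCD (enc x) hencC hdualC
    rw [← hxy, hx0, map_zero]
  have hminwt : minWtIs C₀ (3*r) := by
    constructor
    · obtain ⟨ym, hymC, hym0, hymwt⟩ := hCmin.1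
      obtain ⟨xm, hxm⟩ := hGspan ym hymC
      have hxm0 : xm ≠ 0 := fun h => hym0 (by rw [hxm, h, henc_zero])
      refine ⟨restr (enc xm), (hmemC₀ _).mpr ⟨xm, rfl⟩, hne0 xm hxm0, ?_⟩
      have hrel := hwt_rel xm hxm0
      have hwtym : wt (enc xm) = α := by
        rw [← hxm]
        exact hymwt
      omega
    · intro y hy hy0
      obtain ⟨x, hxy⟩ := (hmemC₀ y).mp hy
      have hx0 : x ≠ 0 := by
        intro h
        apply hy0
        rw [← hxy, h, henc_zero, map_zero]
      rw [← hxy]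
      exact hwt0_ge x hx0
  have hC₀dual : ∀ x : Fin (4*r) → F4, inHermDual C₀ x → wt x ≠ 1 := by
    intro x hdual hwt1
    simp only [wt] at hwt1
    obtain ⟨t, ht⟩ := Finset.card_eq_one.mp hwt1
    have hxt : x t ≠ 0 := by
      have hmem : t ∈ Finset.univ.filter (fun τ => x τ ≠ 0) := by
        rw [ht]; exact Finset.mem_singleton_self t
      exact (Finset.mem_filter.mp hmem).2
    have hother : ∀ τ, τ ≠ t → x τ = 0 := by
      intro τ hτ
      by_contra hτ0
      have hmem : τ ∈ Finset.univ.filter (fun τ => x τ ≠ 0) :=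
        Finset.mem_filter.mpr ⟨Finset.mem_univ _, hτ0⟩
      rw [ht] at hmem
      exact hτ (Finset.mem_singleton.mp hmem)
    have hcolzero : ∀ i : Fin k, G i ((ee t : Fin n)) = 0 := by
      intro i
      have hv0mem : v0 i ∈ C₀ := by
        rw [hC₀]
        exact Submodule.subset_span (Set.mem_range_self i)
      have h3 := hdual (v0 i) hv0mem
      rw [hermInner, Finset.sum_eq_single t] at h3
      · have hv0it : v0 i t = G i ((ee t : Fin n)) := by
          simp only [hv0, hrestrdef, LinearMap.funLeft_apply]
        rw [hv0it] at h3
        rcases mul_eq_zero.mp h3 with h | h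
        · exact absurd h hxt
        · exact (pow_eq_zero_iff (by norm_num)).mp h
      · intro τ _ hτ
        rw [hother τ hτ, zero_mul]
      · intro h; exact absurd (Finset.mem_univ t) h
    apply hcol_ne ((ee t : Fin n))
    funext i
    exact hcolzero i
  exact ⟨C₀, ⟨hC₀rank, hC₀LCD, hminwt⟩, hC₀dual⟩
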